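/- Let d ≥ 3 and let m₁, m₂, n ∈ ℤ^d be linearly independent with m₁·n = m₂·n = 1 and |m₁|² = |m₂|² = M. Set N = |n|², P = m₁·m₂, and define p₁ = (NP−1)m₁ + (1−MN)m₂ + (M−P)n and p₂ = (1−MN)m₁ + (NP−1)m₂ + (M−P)n. Then p₁·m₁ = p₂·m₂ = 0, p₁·n = p₂·n = 0, |p₁| = |p₂|, and the set {m₁, m₂, p₁, p₂} has rank 3. -/
import Mathlib


/-- Construction of two vectors `p₁, p₂` orthogonal to `n` and to `m₁, m₂` respectively,
with `|p₁| = |p₂|`, such that `{m₁, m₂, p₁, p₂}` has rank `3`. -/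
theorem stmt10 (d : ℕ) (hd : 3 ≤ d) (m₁ m₂ n : Fin d → ℤ)
    (hind : LinearIndependent ℚ
      ![(fun i => (m₁ i : ℚ)), (fun i => (m₂ i : ℚ)), (fun i => (n i : ℚ))])
    (h1 : ∑ i, m₁ i * n i = 1) (h2 : ∑ i, m₂ i * n i = 1)
    (M : ℤ) (hM1 : ∑ i, (m₁ i) ^ 2 = M) (hM2 : ∑ i, (m₂ i) ^ 2 = M) :
    ∀ (N P : ℤ), N = ∑ i, (n i) ^ 2 → P = ∑ i, m₁ i * m₂ i →
    ∀ p₁ p₂ : Fin d → ℤ,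
      (∀ i, p₁ i = (N * P - 1) * m₁ i + (1 - M * N) * m₂ i + (M - P) * n i) →
      (∀ i, p₂ i = (1 - M * N) * m₁ i + (N * P - 1) * m₂ i + (M - P) * n i) →
      (∑ i, p₁ i * m₁ i = 0) ∧ (∑ i, p₂ i * m₂ i = 0) ∧
      (∑ i, p₁ i * n i = 0) ∧ (∑ i, p₂ i * n i = 0) ∧
      (∑ i, (p₁ i) ^ 2 = ∑ i, (p₂ i) ^ 2) ∧
      Module.finrank ℚ (Submodule.span ℚ
        ({(fun i => (m₁ i : ℚ)), (fun i => (m₂ i : ℚ)),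
          (fun i => (p₁ i : ℚ)), (fun i => (p₂ i : ℚ))} : Set (Fin d → ℚ))) = 3 := by
  intro N P hN hP p₁ p₂ hp₁ hp₂
  have hP' : ∑ i, m₂ i * m₁ i = P := by
    rw [hP]; exact Finset.sum_congr rfl fun i _ => mul_comm _ _
  have hPP : ∑ i, m₁ i * m₂ i = P := hP.symm
  have hN' : ∑ i, (n i) ^ 2 = N := hN.symm
  -- orthogonality relations
  have c1 : ∑ i, p₁ i * m₁ i = 0 := by
    have : ∑ i, p₁ i * m₁ i
        = (N * P - 1) * (∑ i, (m₁ i) ^ 2) + (1 - M * N) * (∑ i, m₂ i * m₁ i)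
          + (M - P) * (∑ i, m₁ i * n i) := by
      simp only [Finset.mul_sum, ← Finset.sum_add_distrib]
      exact Finset.sum_congr rfl fun i _ => by rw [hp₁ i]; ring
    rw [this, hM1, hP', h1]; ring
  have c2 : ∑ i, p₂ i * m₂ i = 0 := by
    have : ∑ i, p₂ i * m₂ i
        = (1 - M * N) * (∑ i, m₁ i * m₂ i) + (N * P - 1) * (∑ i, (m₂ i) ^ 2)
          + (M - P) * (∑ i, m₂ i * n i) := by
      simp only [Finset.mul_sum, ← Finset.sum_add_distrib]
      exact Finset.sum_congr rfl fun i _ => by rw [hp₂ i]; ring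
    rw [this, hM2, hPP, h2]; ring
  have c3 : ∑ i, p₁ i * n i = 0 := by
    have : ∑ i, p₁ i * n i
        = (N * P - 1) * (∑ i, m₁ i * n i) + (1 - M * N) * (∑ i, m₂ i * n i)
          + (M - P) * (∑ i, (n i) ^ 2) := by
      simp only [Finset.mul_sum, ← Finset.sum_add_distrib]
      exact Finset.sum_congr rfl fun i _ => by rw [hp₁ i]; ring
    rw [this, h1, h2, hN']; ring
  have c4 : ∑ i, p₂ i * n i = 0 := by
    have : ∑ i, p₂ i * n i
        = (1 - M * N) * (∑ i, m₁ i * n i) + (N * P - 1) * (∑ i, m₂ i * n i)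
          + (M - P) * (∑ i, (n i) ^ 2) := by
      simp only [Finset.mul_sum, ← Finset.sum_add_distrib]
      exact Finset.sum_congr rfl fun i _ => by rw [hp₂ i]; ring
    rw [this, h1, h2, hN']; ring
  have c5 : ∑ i, (p₁ i) ^ 2 = ∑ i, (p₂ i) ^ 2 := by
    have e1 : ∑ i, (p₁ i) ^ 2
        = (N * P - 1) ^ 2 * (∑ i, (m₁ i) ^ 2) + (1 - M * N) ^ 2 * (∑ i, (m₂ i) ^ 2)
          + (M - P) ^ 2 * (∑ i, (n i) ^ 2)
          + 2 * (N * P - 1) * (1 - M * N) * (∑ i, m₁ i * m₂ i)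
          + 2 * (N * P - 1) * (M - P) * (∑ i, m₁ i * n i)
          + 2 * (1 - M * N) * (M - P) * (∑ i, m₂ i * n i) := by
      simp only [Finset.mul_sum, ← Finset.sum_add_distrib]
      exact Finset.sum_congr rfl fun i _ => by rw [hp₁ i]; ring
    have e2 : ∑ i, (p₂ i) ^ 2
        = (1 - M * N) ^ 2 * (∑ i, (m₁ i) ^ 2) + (N * P - 1) ^ 2 * (∑ i, (m₂ i) ^ 2)
          + (M - P) ^ 2 * (∑ i, (n i) ^ 2)
          + 2 * (N * P - 1) * (1 - M * N) * (∑ i, m₁ i * m₂ i)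
          + 2 * (1 - M * N) * (M - P) * (∑ i, m₁ i * n i)
          + 2 * (N * P - 1) * (M - P) * (∑ i, m₂ i * n i) := by
      simp only [Finset.mul_sum, ← Finset.sum_add_distrib]
      exact Finset.sum_congr rfl fun i _ => by rw [hp₂ i]; ring
    rw [e1, e2, hM1, hM2, h1, h2]; ring
  refine ⟨c1, c2, c3, c4, c5, ?_⟩
  -- M ≠ P
  have hMP : M ≠ P := by
    intro hmp
    have hsq : ∑ i, (m₁ i - m₂ i) ^ 2 = 0 := by
      have : ∑ i, (m₁ i - m₂ i) ^ 2
          = (∑ i, (m₁ i) ^ 2) + (∑ i, (m₂ i) ^ 2) - 2 * (∑ i, m₁ i * m₂ i) := by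
        rw [Finset.mul_sum, ← Finset.sum_add_distrib, ← Finset.sum_sub_distrib]
        exact Finset.sum_congr rfl fun i _ => by ring
      rw [this, hM1, hM2, hPP, hmp]; ring
    have heq : ∀ i, m₁ i = m₂ i := by
      intro i
      have := (Finset.sum_eq_zero_iff_of_nonneg (fun i _ => sq_nonneg (m₁ i - m₂ i))).mp
        hsq i (Finset.mem_univ i)
      nlinarith [sq_nonneg (m₁ i - m₂ i)]
    have : (fun i => (m₁ i : ℚ)) = (fun i => (m₂ i : ℚ)) := funext fun i => by rw [heq i]
    have h01 : (0 : Fin 3) = 1 := hind.injective (by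
      simp [Matrix.cons_val_zero, Matrix.cons_val_one, Matrix.head_cons, this])
    exact absurd h01 (by decide)
  set a : Fin d → ℚ := (fun i => (m₁ i : ℚ)) with ha
  set b : Fin d → ℚ := (fun i => (m₂ i : ℚ)) with hb
  set nn : Fin d → ℚ := (fun i => (n i : ℚ)) with hnn
  have hC : ((M - P : ℤ) : ℚ) ≠ 0 := by
    exact_mod_cast sub_ne_zero_of_ne hMP
  have hp1q : (fun i => (p₁ i : ℚ))
      = ((N * P - 1 : ℤ) : ℚ) • a + ((1 - M * N : ℤ) : ℚ) • b + ((M - P : ℤ) : ℚ) • nn := by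
    funext i
    simp only [Pi.add_apply, Pi.smul_apply, smul_eq_mul, ha, hb, hnn, hp₁ i]
    push_cast; ring
  have hp2q : (fun i => (p₂ i : ℚ))
      = ((1 - M * N : ℤ) : ℚ) • a + ((N * P - 1 : ℤ) : ℚ) • b + ((M - P : ℤ) : ℚ) • nn := by
    funext i
    simp only [Pi.add_apply, Pi.smul_apply, smul_eq_mul, ha, hb, hnn, hp₂ i]
    push_cast; ring
  have hspan : Submodule.span ℚ
      ({a, b, (fun i => (p₁ i : ℚ)), (fun i => (p₂ i : ℚ))} : Set (Fin d → ℚ))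
      = Submodule.span ℚ ({a, b, nn} : Set (Fin d → ℚ)) := by
    apply le_antisymm
    · rw [Submodule.span_le]
      intro x hx
      have ha' : a ∈ Submodule.span ℚ ({a, b, nn} : Set (Fin d → ℚ)) :=
        Submodule.subset_span (by simp)
      have hb' : b ∈ Submodule.span ℚ ({a, b, nn} : Set (Fin d → ℚ)) :=
        Submodule.subset_span (by simp)
      have hn' : nn ∈ Submodule.span ℚ ({a, b, nn} : Set (Fin d → ℚ)) :=
        Submodule.subset_span (by simp)
      rcases hx with rfl | rfl | rfl | rfl
      · exact ha'
      · exact hb'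
      · rw [hp1q]
        exact Submodule.add_mem _ (Submodule.add_mem _ (Submodule.smul_mem _ _ ha')
          (Submodule.smul_mem _ _ hb')) (Submodule.smul_mem _ _ hn')
      · rw [hp2q]
        exact Submodule.add_mem _ (Submodule.add_mem _ (Submodule.smul_mem _ _ ha')
          (Submodule.smul_mem _ _ hb')) (Submodule.smul_mem _ _ hn')
    · rw [Submodule.span_le]
      intro x hx
      set S := ({a, b, (fun i => (p₁ i : ℚ)), (fun i => (p₂ i : ℚ))} : Set (Fin d → ℚ))
      have ha' : a ∈ Submodule.span ℚ S := Submodule.subset_span (by simp [S])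
      have hb' : b ∈ Submodule.span ℚ S := Submodule.subset_span (by simp [S])
      have hp' : (fun i => (p₁ i : ℚ)) ∈ Submodule.span ℚ S :=
        Submodule.subset_span (by simp [S])
      rcases hx with rfl | rfl | rfl
      · exact ha'
      · exact hb'
      · have : nn = (((M - P : ℤ) : ℚ))⁻¹ •
            ((fun i => (p₁ i : ℚ)) - ((N * P - 1 : ℤ) : ℚ) • a - ((1 - M * N : ℤ) : ℚ) • b) := by
          rw [hp1q, smul_sub, smul_sub, smul_add, smul_add, smul_smul, smul_smul,
            smul_smul, inv_mul_cancel₀ hC, one_smul]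
          abel
        rw [this]
        exact Submodule.smul_mem _ _ (Submodule.sub_mem _ (Submodule.sub_mem _ hp'
          (Submodule.smul_mem _ _ ha')) (Submodule.smul_mem _ _ hb'))
  rw [hspan]
  have hrange : ({a, b, nn} : Set (Fin d → ℚ)) = Set.range ![a, b, nn] := by
    rw [Matrix.range_cons, Matrix.range_cons, Matrix.range_cons, Matrix.range_empty]
    ext x; simp; tauto
  rw [hrange, finrank_span_eq_card hind]
  simp
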